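/- If the null p-values are independent of each other and of the non-null p-values, each null p-value is super-uniform (P(P_j ≤ u) ≤ u for all u ∈ [0,1]), and both sequences {α_t} and {λ_t} are monotone, then for all t ∈ ℕ the expected SAFFRON estimate dominates the FDR: E[FDP̂_λ(t)] ≥ E[FDP(t)] = FDR(t). (Theorem 1(c)) -/

import Mathlib

open MeasureTheory ProbabilityTheory

/-- The rejection-and-candidacy indicator history available just before testing hypothesis `t`:
the pair of indicators `R_j = 1{P_j ≤ α_j}` and `C_j = 1{P_j ≤ λ_j}` for `j < t`,
encoded as a pair of boolean sequences. -/
noncomputable def history {Ω : Type*} (P alpha lam : ℕ → Ω → ℝ) (t : ℕ) (ω : Ω) :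
    (ℕ → Bool) × (ℕ → Bool) :=
  (fun j => decide (j < t ∧ P j ω ≤ alpha j ω), fun j => decide (j < t ∧ P j ω ≤ lam j ω))

/-- The number of rejections `|R(t)|` among the hypotheses indexed `j ≤ t`. -/
noncomputable def numRejections {Ω : Type*} (P alpha : ℕ → Ω → ℝ) (t : ℕ) (ω : Ω) : ℝ :=
  ∑ j ∈ Finset.Iic t, if P j ω ≤ alpha j ω then (1 : ℝ) else 0

open Classical in
/-- The number of false rejections `|H⁰ ∩ R(t)|` among the hypotheses indexed `j ≤ t`. -/
noncomputable def numFalseRejections {Ω : Type*} (H0 : Set ℕ) (P alpha : ℕ → Ω → ℝ)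
    (t : ℕ) (ω : Ω) : ℝ :=
  ∑ j ∈ Finset.Iic t, if j ∈ H0 ∧ P j ω ≤ alpha j ω then (1 : ℝ) else 0

/-- The false discovery proportion `FDP(t) = |H⁰ ∩ R(t)| / max(|R(t)|, 1)`. -/
noncomputable def FDP {Ω : Type*} (H0 : Set ℕ) (P alpha : ℕ → Ω → ℝ) (t : ℕ) (ω : Ω) : ℝ :=
  numFalseRejections H0 P alpha t ω / max (numRejections P alpha t ω) 1

/-- The SAFFRON FDP estimate
`FDP̂_λ(t) = (Σ_{j ≤ t} α_j · 1{P_j > λ_j}/(1 − λ_j)) / max(|R(t)|, 1)`. -/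
noncomputable def FDPhatSaffron {Ω : Type*} (P alpha lam : ℕ → Ω → ℝ) (t : ℕ) (ω : Ω) : ℝ :=
  (∑ j ∈ Finset.Iic t, alpha j ω * (if lam j ω < P j ω then (1 : ℝ) else 0) / (1 - lam j ω))
    / max (numRejections P alpha t ω) 1

/-- The null p-values `{P_j : j ∈ H⁰}` are independent of each other and of
the non-null p-values: the family of σ-algebras consisting of `σ(P_j)` for each null `j`,
together with the σ-algebra generated by all non-null p-values, is independent. -/
def nullsIndep {Ω : Type*} [MeasurableSpace Ω] (μ : Measure Ω) (H0 : Set ℕ)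
    (P : ℕ → Ω → ℝ) : Prop :=
  ProbabilityTheory.iIndep
    (fun i : Option {j : ℕ // j ∈ H0} =>
      i.elim (⨆ j ∈ H0ᶜ, MeasurableSpace.comap (P j) inferInstance)
        (fun j => MeasurableSpace.comap (P j.1) inferInstance)) μ

/-! ### Auxiliary development: the deterministic "run" of the procedure on a p-value sequence -/

/-- The indicator history of the testing procedure determined by level rules `f` and
candidacy rules `g`, run on the (deterministic) p-value sequence `q`. -/
noncomputable def runH (f g : ℕ → (ℕ → Bool) × (ℕ → Bool) → ℝ) :
    ℕ → (ℕ → ℝ) → (ℕ → Bool) × (ℕ → Bool)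
  | s, q =>
    (fun i => if _h : i < s then decide (q i ≤ f i (runH f g i q)) else false,
     fun i => if _h : i < s then decide (q i ≤ g i (runH f g i q)) else false)
termination_by s _q => s

section RunLemmas

variable (f g : ℕ → (ℕ → Bool) × (ℕ → Bool) → ℝ)

lemma runH_fst (s : ℕ) (q : ℕ → ℝ) (i : ℕ) (h : i < s) :
    (runH f g s q).1 i = decide (q i ≤ f i (runH f g i q)) := by rw [runH]; simp [h]

lemma runH_snd (s : ℕ) (q : ℕ → ℝ) (i : ℕ) (h : i < s) :
    (runH f g s q).2 i = decide (q i ≤ g i (runH f g i q)) := by rw [runH]; simp [h]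

lemma runH_fst_ge (s : ℕ) (q : ℕ → ℝ) (i : ℕ) (h : ¬ i < s) :
    (runH f g s q).1 i = false := by rw [runH]; simp [h]

lemma runH_snd_ge (s : ℕ) (q : ℕ → ℝ) (i : ℕ) (h : ¬ i < s) :
    (runH f g s q).2 i = false := by rw [runH]; simp [h]

/-- `runH s` only depends on coordinates `< s`. -/
lemma runH_congr : ∀ (s : ℕ) (q q' : ℕ → ℝ),
    (∀ i < s, q i = q' i) → runH f g s q = runH f g s q' := by
  intro s
  induction s using Nat.strong_induction_on with
  | _ s IH =>
    intro q q' hqq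
    have key : ∀ i, i < s → runH f g i q = runH f g i q' :=
      fun i h => IH i h q q' (fun k hk => hqq k (hk.trans h))
    rw [runH, runH]
    refine Prod.ext ?_ ?_ <;> funext i <;> by_cases h : i < s
    · simp only [dif_pos h]; rw [hqq i h, key i h]
    · simp only [dif_neg h]
    · simp only [dif_pos h]; rw [hqq i h, key i h]
    · simp only [dif_neg h]

/-- Monotonicity: raising p-values lowers the whole indicator history. -/
lemma runH_mono (hf : ∀ t, Monotone (f t)) (hg : ∀ t, Monotone (g t)) :
    ∀ (s : ℕ) (q q' : ℕ → ℝ), q ≤ q' → runH f g s q' ≤ runH f g s q := by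
  intro s
  induction s using Nat.strong_induction_on with
  | _ s IH =>
    intro q q' hqq
    constructor <;> intro i <;> by_cases h : i < s
    · rw [runH_fst f g s q' i h, runH_fst f g s q i h]
      simp only [Bool.le_iff_imp, decide_eq_true_eq]
      intro hle
      exact le_trans (hqq i) (hle.trans (hf i (IH i h q q' hqq)))
    · rw [runH_fst_ge f g s q' i h]; exact Bool.false_le _
    · rw [runH_snd f g s q' i h, runH_snd f g s q i h]
      simp only [Bool.le_iff_imp, decide_eq_true_eq]
      intro hle
      exact le_trans (hqq i) (hle.trans (hg i (IH i h q q' hqq)))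
    · rw [runH_snd_ge f g s q' i h]; exact Bool.false_le _

/-- If coordinate `j` is neither rejected nor a candidate before and after the update,
the whole run is unchanged. -/
lemma runH_update (j : ℕ) (q : ℕ → ℝ) (c : ℝ)
    (h1 : ¬ q j ≤ f j (runH f g j q)) (h2 : ¬ q j ≤ g j (runH f g j q))
    (h3 : ¬ c ≤ f j (runH f g j q)) (h4 : ¬ c ≤ g j (runH f g j q)) :
    ∀ s : ℕ, runH f g s q = runH f g s (Function.update q j c) := by
  intro s
  induction s using Nat.strong_induction_on with
  | _ s IH =>
    have hag : ∀ i < j, q i = Function.update q j c i := by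
      intro i hi; rw [Function.update_of_ne (Nat.ne_of_lt hi)]
    have hrunj : runH f g j q = runH f g j (Function.update q j c) := runH_congr f g j _ _ hag
    refine Prod.ext ?_ ?_ <;> funext i <;> by_cases h : i < s
    · rw [runH_fst f g s q i h, runH_fst f g s _ i h]
      by_cases hij : i = j
      · subst hij
        rw [← hrunj, Function.update_self]
        simp [h1, h3]
      · rw [Function.update_of_ne hij, ← IH i h]
    · rw [runH_fst_ge f g s q i h, runH_fst_ge f g s _ i h]
    · rw [runH_snd f g s q i h, runH_snd f g s _ i h]
      by_cases hij : i = j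
      · subst hij
        rw [← hrunj, Function.update_self]
        simp [h2, h4]
      · rw [Function.update_of_ne hij, ← IH i h]
    · rw [runH_snd_ge f g s q i h, runH_snd_ge f g s _ i h]

/-- The run of `(f, g)` on the realized p-values reproduces the actual history. -/
lemma runH_eq_history {Ω : Type*} (P alpha lam : ℕ → Ω → ℝ)
    (hpreda : ∀ t ω, alpha t ω = f t (history P alpha lam t ω))
    (hpredl : ∀ t ω, lam t ω = g t (history P alpha lam t ω)) :
    ∀ (s : ℕ) (ω : Ω), runH f g s (fun i => P i ω) = history P alpha lam s ω := by
  intro s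
  induction s using Nat.strong_induction_on with
  | _ s IH =>
    intro ω
    rw [runH, history]
    refine Prod.ext ?_ ?_ <;> funext i <;> by_cases h : i < s
    · simp only [dif_pos h, IH i h ω, ← hpreda i ω, h, true_and, dite_true]
    · simp only [dif_neg h, h, false_and, decide_false, dite_false]
    · simp only [dif_pos h, IH i h ω, ← hpredl i ω, h, true_and, dite_true]
    · simp only [dif_neg h, h, false_and, decide_false, dite_false]

lemma measurable_decide_le {Ω : Type*} {m : MeasurableSpace Ω} {u v : Ω → ℝ}
    (hu : Measurable u) (hv : Measurable v) :
    Measurable (fun ω => decide (u ω ≤ v ω)) := by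
  apply measurable_to_bool
  have : (fun ω => decide (u ω ≤ v ω)) ⁻¹' {true} = {ω | u ω ≤ v ω} := by ext ω; simp
  rw [this]
  exact measurableSet_le hu hv

/-- extension of a finite boolean history to `ℕ`. -/
def extB (s : ℕ) (v : (Fin s → Bool) × (Fin s → Bool)) : (ℕ → Bool) × (ℕ → Bool) :=
  (fun i => if h : i < s then v.1 ⟨i, h⟩ else false,
   fun i => if h : i < s then v.2 ⟨i, h⟩ else false)

/-- restriction of the run to its first `s` coordinates. -/
noncomputable def resB (s : ℕ) (q : ℕ → ℝ) : (Fin s → Bool) × (Fin s → Bool) :=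
  (fun i => (runH f g s q).1 i, fun i => (runH f g s q).2 i)

lemma extB_resB (s : ℕ) (q : ℕ → ℝ) : extB s (resB f g s q) = runH f g s q := by
  refine Prod.ext ?_ ?_ <;> funext i <;> by_cases h : i < s
  · simp only [extB, resB, dif_pos h]
  · simp only [extB, dif_neg h]; exact (runH_fst_ge f g s q i h).symm
  · simp only [extB, resB, dif_pos h]
  · simp only [extB, dif_neg h]; exact (runH_snd_ge f g s q i h).symm

/-- The levels and thresholds produced by the run are measurable functions of the data. -/
lemma measurable_runHfg {Ω : Type*} {m : MeasurableSpace Ω} (Q : ℕ → Ω → ℝ)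
    (hQ : ∀ i, Measurable (Q i)) :
    ∀ s : ℕ, Measurable (fun ω => f s (runH f g s (fun i => Q i ω)))
      ∧ Measurable (fun ω => g s (runH f g s (fun i => Q i ω))) := by
  intro s
  induction s using Nat.strong_induction_on with
  | _ s IH =>
    have hres : Measurable (fun ω => resB f g s (fun i => Q i ω)) := by
      refine Measurable.prod ?_ ?_ <;> rw [measurable_pi_iff] <;> intro i
      · have : (fun ω => (runH f g s (fun i => Q i ω)).1 i.1)
            = fun ω => decide (Q i.1 ω ≤ f i.1 (runH f g i.1 (fun k => Q k ω))) := by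
          funext ω; exact runH_fst f g s _ i.1 i.2
        exact this ▸ measurable_decide_le (hQ i.1) (IH i.1 i.2).1
      · have : (fun ω => (runH f g s (fun i => Q i ω)).2 i.1)
            = fun ω => decide (Q i.1 ω ≤ g i.1 (runH f g i.1 (fun k => Q k ω))) := by
          funext ω; exact runH_snd f g s _ i.1 i.2
        exact this ▸ measurable_decide_le (hQ i.1) (IH i.1 i.2).2
    constructor
    · have : (fun ω => f s (runH f g s (fun i => Q i ω)))
          = (fun v => f s (extB s v)) ∘ (fun ω => resB f g s (fun i => Q i ω)) := by
        funext ω; simp only [Function.comp_apply, extB_resB]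
      rw [this]
      exact Measurable.comp .of_discrete hres
    · have : (fun ω => g s (runH f g s (fun i => Q i ω)))
          = (fun v => g s (extB s v)) ∘ (fun ω => resB f g s (fun i => Q i ω)) := by
        funext ω; simp only [Function.comp_apply, extB_resB]
      rw [this]
      exact Measurable.comp .of_discrete hres

/-- The restricted run is a measurable function of the data. -/
lemma measurable_resB {Ω : Type*} {m : MeasurableSpace Ω} (Q : ℕ → Ω → ℝ)
    (hQ : ∀ i, Measurable (Q i)) (s : ℕ) :
    Measurable (fun ω => resB f g s (fun i => Q i ω)) := by
  refine Measurable.prod ?_ ?_ <;> rw [measurable_pi_iff] <;> intro i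
  · have : (fun ω => (runH f g s (fun i => Q i ω)).1 i.1)
        = fun ω => decide (Q i.1 ω ≤ f i.1 (runH f g i.1 (fun k => Q k ω))) := by
      funext ω; exact runH_fst f g s _ i.1 i.2
    exact this ▸ measurable_decide_le (hQ i.1) (measurable_runHfg f g Q hQ i.1).1
  · have : (fun ω => (runH f g s (fun i => Q i ω)).2 i.1)
        = fun ω => decide (Q i.1 ω ≤ g i.1 (runH f g i.1 (fun k => Q k ω))) := by
      funext ω; exact runH_snd f g s _ i.1 i.2
    exact this ▸ measurable_decide_le (hQ i.1) (measurable_runHfg f g Q hQ i.1).2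

/-- Number of rejections among indices `≤ t` of the run on the p-value sequence `q`. -/
noncomputable def NRr (t : ℕ) (q : ℕ → ℝ) : ℝ :=
  ∑ i ∈ Finset.Iic t, if q i ≤ f i (runH f g i q) then (1 : ℝ) else 0

lemma NRr_nonneg (t : ℕ) (q : ℕ → ℝ) : 0 ≤ NRr f g t q :=
  Finset.sum_nonneg fun i _ => by positivity

lemma NRr_eq_sum_run (t : ℕ) (q : ℕ → ℝ) :
    NRr f g t q = ∑ i ∈ Finset.Iic t, if (runH f g (t+1) q).1 i = true then (1 : ℝ) else 0 := by
  refine Finset.sum_congr rfl fun i hi => ?_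
  rw [runH_fst f g (t+1) q i (Nat.lt_succ_of_le (Finset.mem_Iic.mp hi))]
  by_cases h : q i ≤ f i (runH f g i q) <;> simp [h]

lemma runH_le_of_update (hf : ∀ t, Monotone (f t)) (hg : ∀ t, Monotone (g t))
    (j : ℕ) (q : ℕ → ℝ) (hqj : q j ≤ 1) (s : ℕ) :
    runH f g s (Function.update q j 1) ≤ runH f g s q := by
  refine runH_mono f g hf hg s q _ fun i => ?_
  rcases eq_or_ne i j with rfl | h
  · rw [Function.update_self]; exact hqj
  · rw [Function.update_of_ne h]

/-- The key counting inequality: if `j` is rejected, hallucinating `P_j = 1` strictly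
decreases the rejection count. -/
lemma NRr_update_le (hf : ∀ t, Monotone (f t)) (hg : ∀ t, Monotone (g t))
    (t j : ℕ) (hj : j ≤ t) (q : ℕ → ℝ)
    (hq1 : q j ≤ f j (runH f g j q)) (hqj : q j ≤ 1)
    (hfa : f j (runH f g j q) < 1) :
    NRr f g t (Function.update q j 1) + 1 ≤ NRr f g t q := by
  set r := Function.update q j 1 with hr
  have hjr : runH f g j r = runH f g j q :=
    (runH_congr f g j q r fun i hi => (Function.update_of_ne (Nat.ne_of_lt hi) _ _).symm).symm
  have hjmem : j ∈ Finset.Iic t := Finset.mem_Iic.mpr hj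
  have hsplit : ∀ q' : ℕ → ℝ, NRr f g t q' =
      (if q' j ≤ f j (runH f g j q') then (1:ℝ) else 0) +
        ∑ i ∈ (Finset.Iic t).erase j, (if q' i ≤ f i (runH f g i q') then (1:ℝ) else 0) := by
    intro q'; rw [NRr, ← Finset.add_sum_erase _ _ hjmem]
  rw [hsplit q, hsplit r]
  have hterm_r : (if r j ≤ f j (runH f g j r) then (1:ℝ) else 0) = 0 := by
    rw [hjr, hr, Function.update_self, if_neg (not_le.mpr hfa)]
  have hterm_q : (if q j ≤ f j (runH f g j q) then (1:ℝ) else 0) = 1 := if_pos hq1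
  rw [hterm_r, hterm_q, zero_add, add_comm]
  refine add_le_add le_rfl (Finset.sum_le_sum fun i hi => ?_)
  have hij : i ≠ j := Finset.ne_of_mem_erase hi
  have hri : r i = q i := Function.update_of_ne hij _ _
  by_cases hcase : r i ≤ f i (runH f g i r)
  · rw [if_pos hcase, if_pos ?_]
    exact le_trans (hri ▸ hcase) (hf i (runH_le_of_update f g hf hg j q hqj i))
  · rw [if_neg hcase]; positivity

/-- If `j` is not even a candidate, hallucinating `P_j = 1` leaves the count unchanged. -/
lemma NRr_update_eq (t j : ℕ) (q : ℕ → ℝ)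
    (h1 : ¬ q j ≤ f j (runH f g j q)) (h2 : ¬ q j ≤ g j (runH f g j q))
    (h3 : ¬ (1:ℝ) ≤ f j (runH f g j q)) (h4 : ¬ (1:ℝ) ≤ g j (runH f g j q)) :
    NRr f g t (Function.update q j 1) = NRr f g t q := by
  have hrun := runH_update f g j q 1 h1 h2 h3 h4
  refine Finset.sum_congr rfl fun i _ => ?_
  rw [← hrun i]
  rcases eq_or_ne i j with rfl | h
  · rw [Function.update_self, if_neg h1, if_neg h3]
  · rw [Function.update_of_ne h]

end RunLemmas

lemma integrable_of_bounded' {Ω : Type*} [MeasurableSpace Ω] {μ : Measure Ω} [IsFiniteMeasure μ]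
    {h : Ω → ℝ} (C : ℝ) (hm : Measurable h) (hb : ∀ ω, |h ω| ≤ C) : Integrable h μ :=
  (integrable_const C).mono' hm.aestronglyMeasurable
    (Filter.Eventually.of_forall (by simpa [Real.norm_eq_abs] using hb))

lemma abs_div_le_of (a b C : ℝ) (h0 : 0 ≤ a) (hC : a ≤ C) (hb : 1 ≤ b) : |a / b| ≤ C := by
  rw [abs_of_nonneg (div_nonneg h0 (zero_le_one.trans hb))]
  exact (div_le_self h0 hb).trans hC

/-- From `nullsIndep`: any event generated by `P_j` (null `j`) is independent of any event
that is measurable w.r.t. every σ-algebra containing all `σ(P_i)`, `i ≠ j`. -/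
lemma nullsIndep_inter {Ω : Type*} [m0 : MeasurableSpace Ω] (μ : Measure Ω)
    [IsProbabilityMeasure μ] (P : ℕ → Ω → ℝ) (H0 : Set ℕ)
    (hPmeas : ∀ k, Measurable (P k)) (hindep : nullsIndep μ H0 P)
    (j : ℕ) (hjH : j ∈ H0) (B : Set ℝ) (hB : MeasurableSet B) (A : Set Ω)
    (hA : ∀ m : MeasurableSpace Ω,
      (∀ i : ℕ, i ≠ j → MeasurableSpace.comap (P i) inferInstance ≤ m) →
        MeasurableSet[m] A) :
    μ (P j ⁻¹' B ∩ A) = μ (P j ⁻¹' B) * μ A := by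
  classical
  set mfam : Option {k : ℕ // k ∈ H0} → MeasurableSpace Ω := fun i =>
    i.elim (⨆ k ∈ H0ᶜ, MeasurableSpace.comap (P k) inferInstance)
      (fun k => MeasurableSpace.comap (P k.1) inferInstance) with hmfamdef
  have h_le : ∀ i, mfam i ≤ m0 := by
    intro i
    match i with
    | none => exact iSup₂_le fun k _ => (hPmeas k).comap_le
    | some k => exact (hPmeas k.1).comap_le
  have hindep' : ProbabilityTheory.iIndep mfam μ := hindep
  set i0 : Option {k : ℕ // k ∈ H0} := some ⟨j, hjH⟩ with hi0def
  have hIndep : Indep (mfam i0)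
      (⨆ i ∈ ({i0}ᶜ : Set (Option {k : ℕ // k ∈ H0})), mfam i) μ := by
    have h := indep_iSup_of_disjoint h_le hindep'
      (disjoint_compl_right (a := ({i0} : Set (Option {k : ℕ // k ∈ H0}))))
    rwa [iSup_singleton] at h
  have hcomapG : ∀ i : ℕ, i ≠ j → MeasurableSpace.comap (P i) inferInstance
      ≤ ⨆ i ∈ ({i0}ᶜ : Set (Option {k : ℕ // k ∈ H0})), mfam i := by
    intro i hij
    by_cases hiH : i ∈ H0
    · have hmem : (some ⟨i, hiH⟩ : Option {k : ℕ // k ∈ H0})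
          ∈ ({i0}ᶜ : Set (Option {k : ℕ // k ∈ H0})) := by
        simp only [Set.mem_compl_iff, Set.mem_singleton_iff, hi0def]
        intro hcc
        exact hij (by simpa using hcc)
      exact le_biSup mfam hmem
    · have hmem : (none : Option {k : ℕ // k ∈ H0})
          ∈ ({i0}ᶜ : Set (Option {k : ℕ // k ∈ H0})) := by
        simp [hi0def]
      refine le_trans ?_ (le_biSup mfam hmem)
      exact le_biSup (fun k => MeasurableSpace.comap (P k) inferInstance) hiH
  have hSmem : MeasurableSet[mfam i0] (P j ⁻¹' B) := ⟨B, hB, rfl⟩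
  have hAmem : MeasurableSet[⨆ i ∈ ({i0}ᶜ : Set (Option {k : ℕ // k ∈ H0})), mfam i] A :=
    hA _ hcomapG
  exact (hIndep.indepSet_of_measurableSet hSmem hAmem).measure_inter_eq_mul

/-- Theorem 1(c): if the null p-values are independent of each other and of the non-nulls,
each null p-value is super-uniform, and both `{α_t}` and `{λ_t}` are monotone, then
`E[FDP̂_λ(t)] ≥ E[FDP(t)] = FDR(t)` for all `t`. -/
theorem theorem1c {Ω : Type*} [m0 : MeasurableSpace Ω]
    (μ : Measure Ω) [IsProbabilityMeasure μ]
    (P alpha lam : ℕ → Ω → ℝ) (H0 : Set ℕ)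
    (hPmeas : ∀ j, Measurable (P j)) (hP01 : ∀ j ω, P j ω ∈ Set.Icc (0 : ℝ) 1)
    (hameas : ∀ j, Measurable (alpha j)) (ha01 : ∀ j ω, alpha j ω ∈ Set.Ioo (0 : ℝ) 1)
    (hlmeas : ∀ j, Measurable (lam j)) (hl01 : ∀ j ω, lam j ω ∈ Set.Ioo (0 : ℝ) 1)
    (halam : ∀ j ω, alpha j ω ≤ lam j ω)
    -- independence of the nulls from each other and from the non-nulls
    (hindep : nullsIndep μ H0 P)
    -- marginal super-uniformity of each null p-value
    (hnull : ∀ j ∈ H0, ∀ u ∈ Set.Icc (0 : ℝ) 1, μ {ω | P j ω ≤ u} ≤ ENNReal.ofReal u)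
    -- predictability and monotonicity of the level and threshold sequences
    (f g : ℕ → (ℕ → Bool) × (ℕ → Bool) → ℝ)
    (hpreda : ∀ t ω, alpha t ω = f t (history P alpha lam t ω))
    (hpredl : ∀ t ω, lam t ω = g t (history P alpha lam t ω))
    (hfmono : ∀ t, Monotone (f t)) (hgmono : ∀ t, Monotone (g t))
    (t : ℕ) :
    ∫ ω, FDP H0 P alpha t ω ∂μ ≤ ∫ ω, FDPhatSaffron P alpha lam t ω ∂μ := by
  classical
  have hrunhist := runH_eq_history f g P alpha lam hpreda hpredl
  have haf : ∀ s ω, alpha s ω = f s (runH f g s (fun i => P i ω)) := fun s ω => by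
    rw [hrunhist s ω]; exact hpreda s ω
  have hlg : ∀ s ω, lam s ω = g s (runH f g s (fun i => P i ω)) := fun s ω => by
    rw [hrunhist s ω]; exact hpredl s ω
  have hNReq : ∀ ω, numRejections P alpha t ω = NRr f g t (fun i => P i ω) := by
    intro ω; refine Finset.sum_congr rfl fun i _ => ?_; rw [haf i ω]
  -- per-index terms
  set T1 : ℕ → Ω → ℝ := fun j ω =>
    (if j ∈ H0 ∧ P j ω ≤ alpha j ω then (1:ℝ) else 0)
      / max (numRejections P alpha t ω) 1 with hT1def
  set T2 : ℕ → Ω → ℝ := fun j ω =>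
    alpha j ω * (if lam j ω < P j ω then (1:ℝ) else 0) / (1 - lam j ω)
      / max (numRejections P alpha t ω) 1 with hT2def
  -- basic measurability and bounds
  have hNRmeas : Measurable (fun ω => numRejections P alpha t ω) := by
    apply Finset.measurable_sum; intro i _
    exact Measurable.ite (measurableSet_le (hPmeas i) (hameas i))
      measurable_const measurable_const
  have hmaxmeas : Measurable (fun ω => max (numRejections P alpha t ω) 1) :=
    hNRmeas.max measurable_const
  have hmaxone : ∀ ω, 1 ≤ max (numRejections P alpha t ω) 1 := fun ω => le_max_right _ _
  have hT1meas : ∀ j, Measurable (T1 j) := by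
    intro j
    apply Measurable.div _ hmaxmeas
    by_cases hjH : j ∈ H0
    · have : (fun ω => if j ∈ H0 ∧ P j ω ≤ alpha j ω then (1:ℝ) else 0)
          = fun ω => if P j ω ≤ alpha j ω then (1:ℝ) else 0 := by
        funext ω; simp [hjH]
      rw [this]
      exact Measurable.ite (measurableSet_le (hPmeas j) (hameas j))
        measurable_const measurable_const
    · have : (fun ω => if j ∈ H0 ∧ P j ω ≤ alpha j ω then (1:ℝ) else 0)
          = fun _ => (0:ℝ) := by funext ω; simp [hjH]
      rw [this]; exact measurable_const
  have hT2meas : ∀ j, Measurable (T2 j) := by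
    intro j
    exact (((hameas j).mul
        (Measurable.ite (measurableSet_lt (hlmeas j) (hPmeas j))
          measurable_const measurable_const)).div
        (measurable_const.sub (hlmeas j))).div hmaxmeas
  have hT1int : ∀ j, Integrable (T1 j) μ := by
    intro j
    refine integrable_of_bounded' 1 (hT1meas j) fun ω => ?_
    exact abs_div_le_of _ _ 1 (by split_ifs <;> norm_num)
      (by split_ifs <;> norm_num) (hmaxone ω)
  -- bound for `α_j/(1 - λ_j)`: the pair `(α_j, λ_j)` takes finitely many values
  have hVne : ∀ j : ℕ, ((Finset.univ : Finset ((Fin j → Bool) × (Fin j → Bool)))).Nonempty :=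
    fun j => Finset.univ_nonempty
  set φC : ∀ j : ℕ, ((Fin j → Bool) × (Fin j → Bool)) → ℝ :=
    fun j v => |f j (extB j v) / (1 - g j (extB j v))| with hφCdef
  set C : ℕ → ℝ := fun j => Finset.univ.sup' (hVne j) (φC j) with hCdef
  have hCb : ∀ j ω, |alpha j ω / (1 - lam j ω)| ≤ C j := by
    intro j ω
    have h1 : alpha j ω = f j (extB j (resB f g j (fun i => P i ω))) := by
      rw [extB_resB]; exact haf j ω
    have h2 : lam j ω = g j (extB j (resB f g j (fun i => P i ω))) := by
      rw [extB_resB]; exact hlg j ω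
    rw [h1, h2]
    exact Finset.le_sup' (φC j) (Finset.mem_univ _)
  have hC0 : ∀ j, 0 ≤ C j := fun j =>
    le_trans (abs_nonneg (f j (extB j default) / (1 - g j (extB j default))))
      (Finset.le_sup' (φC j) (Finset.mem_univ default))
  have hT2nonneg : ∀ j ω, 0 ≤ T2 j ω := by
    intro j ω
    refine div_nonneg (div_nonneg (mul_nonneg (ha01 j ω).1.le ?_) ?_) ?_
    · split_ifs <;> norm_num
    · linarith [(hl01 j ω).2]
    · exact zero_le_one.trans (hmaxone ω)
  have hT2b : ∀ j ω, |T2 j ω| ≤ C j := by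
    intro j ω
    show |alpha j ω * (if lam j ω < P j ω then (1:ℝ) else 0) / (1 - lam j ω)
      / max (numRejections P alpha t ω) 1| ≤ C j
    by_cases hc : lam j ω < P j ω
    · rw [if_pos hc, mul_one, abs_div, abs_of_nonneg (zero_le_one.trans (hmaxone ω))]
      exact le_trans (div_le_self (abs_nonneg _) (hmaxone ω)) (hCb j ω)
    · rw [if_neg hc, mul_zero, zero_div, zero_div, abs_zero]
      exact hC0 j
  have hT2int : ∀ j, Integrable (T2 j) μ := fun j =>
    integrable_of_bounded' (C j) (hT2meas j) (hT2b j)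
  -- reduce to a per-index comparison
  have hFDPsum : (fun ω => FDP H0 P alpha t ω) = fun ω => ∑ j ∈ Finset.Iic t, T1 j ω := by
    funext ω; rw [FDP, numFalseRejections, Finset.sum_div]
  have hFDPhatsum : (fun ω => FDPhatSaffron P alpha lam t ω)
      = fun ω => ∑ j ∈ Finset.Iic t, T2 j ω := by
    funext ω; rw [FDPhatSaffron, Finset.sum_div]
  rw [show ∫ ω, FDP H0 P alpha t ω ∂μ = ∑ j ∈ Finset.Iic t, ∫ ω, T1 j ω ∂μ by
      rw [show (fun ω => FDP H0 P alpha t ω) = _ from hFDPsum]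
      exact integral_finset_sum _ fun j _ => hT1int j,
    show ∫ ω, FDPhatSaffron P alpha lam t ω ∂μ = ∑ j ∈ Finset.Iic t, ∫ ω, T2 j ω ∂μ by
      rw [show (fun ω => FDPhatSaffron P alpha lam t ω) = _ from hFDPhatsum]
      exact integral_finset_sum _ fun j _ => hT2int j]
  refine Finset.sum_le_sum fun j hj => ?_
  by_cases hjH : j ∈ H0
  case neg =>
    have hz : T1 j = fun _ => (0:ℝ) := by
      funext ω
      show (if j ∈ H0 ∧ P j ω ≤ alpha j ω then (1:ℝ) else 0)
        / max (numRejections P alpha t ω) 1 = 0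
      rw [if_neg (fun hc => hjH hc.1), zero_div]
    rw [hz, integral_zero]
    exact integral_nonneg (hT2nonneg j)
  case pos =>
    have hjt : j ≤ t := Finset.mem_Iic.mp hj
    -- the hallucinated p-value sequence, with `P_j` replaced by `1`
    set r : Ω → ℕ → ℝ := fun ω => Function.update (fun i => P i ω) j 1 with hrdef
    have hrQ : ∀ i, Measurable (fun ω => r ω i) := by
      intro i
      have heq : (fun ω => r ω i) = fun ω => if i = j then (1:ℝ) else P i ω := by
        funext ω; exact Function.update_apply _ _ _ _
      rw [heq]
      rcases eq_or_ne i j with rfl | h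
      · simp
      · simpa [h] using hPmeas i
    have hrjrun : ∀ ω, runH f g j (r ω) = runH f g j (fun i => P i ω) := fun ω =>
      runH_congr f g j _ _ fun i hi => Function.update_of_ne (Nat.ne_of_lt hi) _ _
    set N : Ω → ℝ := fun ω => max (NRr f g t (r ω)) 1 with hNdef
    have hN1 : ∀ ω, 1 ≤ N ω := fun ω => le_max_right _ _
    have hNpos : ∀ ω, 0 < N ω := fun ω => lt_of_lt_of_le one_pos (hN1 ω)
    set M1 : Ω → ℝ := fun ω => (if P j ω ≤ alpha j ω then (1:ℝ) else 0) / N ω with hM1def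
    set M2 : Ω → ℝ := fun ω =>
      alpha j ω * (if lam j ω < P j ω then (1:ℝ) else 0) / (1 - lam j ω) / N ω with hM2def
    -- Claim A: the true FDP term is dominated by the hallucinated one
    have hA : ∀ ω, T1 j ω ≤ M1 ω := by
      intro ω
      show (if j ∈ H0 ∧ P j ω ≤ alpha j ω then (1:ℝ) else 0)
          / max (numRejections P alpha t ω) 1
        ≤ (if P j ω ≤ alpha j ω then (1:ℝ) else 0) / N ω
      by_cases hP : P j ω ≤ alpha j ω
      · rw [if_pos ⟨hjH, hP⟩, if_pos hP]
        have h0r := NRr_nonneg f g t (r ω)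
        have hle : NRr f g t (r ω) + 1 ≤ NRr f g t (fun i => P i ω) := by
          refine NRr_update_le f g hfmono hgmono t j hjt _ ?_ ?_ ?_
          · rw [← haf j ω]; exact hP
          · exact (hP01 j ω).2
          · rw [← haf j ω]; exact (ha01 j ω).2
        have hNle : N ω ≤ max (numRejections P alpha t ω) 1 := by
          rw [hNReq ω]
          have h1 : N ω ≤ NRr f g t (r ω) + 1 := max_le (by linarith) (by linarith)
          exact le_trans h1 (hle.trans (le_max_left _ _))
        exact one_div_le_one_div_of_le (hNpos ω) hNle
      · rw [if_neg (fun hc => hP hc.2), if_neg hP, zero_div, zero_div]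
    -- Claim B: the hallucinated SAFFRON term coincides with the true one
    have hB : ∀ ω, T2 j ω = M2 ω := by
      intro ω
      show alpha j ω * (if lam j ω < P j ω then (1:ℝ) else 0) / (1 - lam j ω)
          / max (numRejections P alpha t ω) 1
        = alpha j ω * (if lam j ω < P j ω then (1:ℝ) else 0) / (1 - lam j ω) / N ω
      by_cases hc : lam j ω < P j ω
      · have hNeq : NRr f g t (r ω) = NRr f g t (fun i => P i ω) := by
          refine NRr_update_eq f g t j _ ?_ ?_ ?_ ?_
          · rw [← haf j ω]; exact not_le.mpr (lt_of_le_of_lt (halam j ω) hc)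
          · rw [← hlg j ω]; exact not_le.mpr hc
          · rw [← haf j ω]; exact not_le.mpr (ha01 j ω).2
          · rw [← hlg j ω]; exact not_le.mpr (hl01 j ω).2
        have hNeq2 : N ω = max (numRejections P alpha t ω) 1 := by
          rw [hNReq ω]
          show max (NRr f g t (r ω)) 1 = _
          rw [hNeq]
        rw [hNeq2]
      · rw [if_neg hc]; simp
    -- measurability and integrability of the hallucinated terms
    have hNmeas : Measurable N := by
      apply Measurable.max _ measurable_const
      show Measurable fun ω => ∑ i ∈ Finset.Iic t,
        if r ω i ≤ f i (runH f g i (r ω)) then (1:ℝ) else 0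
      apply Finset.measurable_sum; intro i _
      exact Measurable.ite
        (measurableSet_le (hrQ i) ((measurable_runHfg f g (fun i ω => r ω i) hrQ i).1))
        measurable_const measurable_const
    have hM1meas : Measurable M1 := by
      apply Measurable.div _ hNmeas
      exact Measurable.ite (measurableSet_le (hPmeas j) (hameas j))
        measurable_const measurable_const
    have hM1int : Integrable M1 μ := by
      refine integrable_of_bounded' 1 hM1meas fun ω => ?_
      exact abs_div_le_of _ _ 1 (by split_ifs <;> norm_num)
        (by split_ifs <;> norm_num) (hN1 ω)
    -- the finite data on which everything depends: the hallucinated run up to time `t`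
    set D : Ω → (Fin (t+1) → Bool) × (Fin (t+1) → Bool) :=
      fun ω => resB f g (t+1) (r ω) with hDdef
    set ahat : (Fin (t+1) → Bool) × (Fin (t+1) → Bool) → ℝ := fun v =>
      f j (fun i => if h : i < t+1 then (decide (i < j) && v.1 ⟨i, h⟩) else false,
           fun i => if h : i < t+1 then (decide (i < j) && v.2 ⟨i, h⟩) else false) with hahatdef
    set lhat : (Fin (t+1) → Bool) × (Fin (t+1) → Bool) → ℝ := fun v =>
      g j (fun i => if h : i < t+1 then (decide (i < j) && v.1 ⟨i, h⟩) else false,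
           fun i => if h : i < t+1 then (decide (i < j) && v.2 ⟨i, h⟩) else false) with hlhatdef
    set nhat : (Fin (t+1) → Bool) × (Fin (t+1) → Bool) → ℝ := fun v =>
      max (∑ i ∈ Finset.Iic t,
        if h : i < t+1 then (if v.1 ⟨i, h⟩ = true then (1:ℝ) else 0) else 0) 1 with hnhatdef
    have hkey : ∀ ω, runH f g j (r ω)
        = (fun i => if h : i < t+1 then (decide (i < j) && (D ω).1 ⟨i, h⟩) else false,
           fun i => if h : i < t+1 then (decide (i < j) && (D ω).2 ⟨i, h⟩) else false) := by
      intro ω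
      refine Prod.ext ?_ ?_ <;> funext i
      · show (runH f g j (r ω)).1 i = _
        by_cases hi : i < j
        · have hit : i < t+1 := by omega
          rw [runH_fst f g j (r ω) i hi]
          simp only [dif_pos hit, hi, decide_true, Bool.true_and]
          show _ = (runH f g (t+1) (r ω)).1 i
          rw [runH_fst f g (t+1) (r ω) i hit]
        · rw [runH_fst_ge f g j (r ω) i hi]
          by_cases hit : i < t+1
          · simp only [dif_pos hit, hi, decide_false, Bool.false_and]
          · simp only [dif_neg hit]
      · show (runH f g j (r ω)).2 i = _
        by_cases hi : i < j
        · have hit : i < t+1 := by omega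
          rw [runH_snd f g j (r ω) i hi]
          simp only [dif_pos hit, hi, decide_true, Bool.true_and]
          show _ = (runH f g (t+1) (r ω)).2 i
          rw [runH_snd f g (t+1) (r ω) i hit]
        · rw [runH_snd_ge f g j (r ω) i hi]
          by_cases hit : i < t+1
          · simp only [dif_pos hit, hi, decide_false, Bool.false_and]
          · simp only [dif_neg hit]
    have haD : ∀ ω, alpha j ω = ahat (D ω) := by
      intro ω
      rw [haf j ω, ← hrjrun ω, hkey ω]
    have hlD : ∀ ω, lam j ω = lhat (D ω) := by
      intro ω
      rw [hlg j ω, ← hrjrun ω, hkey ω]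
    have hnD : ∀ ω, N ω = nhat (D ω) := by
      intro ω
      show max (NRr f g t (r ω)) 1 = _
      rw [NRr_eq_sum_run f g t (r ω)]
      congr 1
      refine Finset.sum_congr rfl fun i hi => ?_
      have hit : i < t+1 := Nat.lt_succ_of_le (Finset.mem_Iic.mp hi)
      rw [dif_pos hit]
      rfl
    -- the events
    set S : (Fin (t+1) → Bool) × (Fin (t+1) → Bool) → Set Ω :=
      fun v => {ω | P j ω ≤ ahat v} with hSdef
    set Sc : (Fin (t+1) → Bool) × (Fin (t+1) → Bool) → Set Ω :=
      fun v => {ω | lhat v < P j ω} with hScdef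
    set E : (Fin (t+1) → Bool) × (Fin (t+1) → Bool) → Set Ω :=
      fun v => {ω | D ω = v} with hEdef
    have hSm0 : ∀ v, MeasurableSet (S v) :=
      fun v => measurableSet_le (hPmeas j) measurable_const
    have hScm0 : ∀ v, MeasurableSet (Sc v) :=
      fun v => measurableSet_lt measurable_const (hPmeas j)
    -- measurability of `D` w.r.t. any σ-algebra containing the other p-values
    have hDm : ∀ m : MeasurableSpace Ω,
        (∀ i : ℕ, i ≠ j → MeasurableSpace.comap (P i) inferInstance ≤ m) →
          Measurable[m] D := by
      intro m hm
      refine measurable_resB (m := m) f g (fun i ω => r ω i) ?_ (t+1)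
      intro i
      show Measurable fun ω => r ω i
      have heq : (fun ω => r ω i) = fun ω => if i = j then (1:ℝ) else P i ω := by
        funext ω; exact Function.update_apply _ _ _ _
      rw [heq]
      rcases eq_or_ne i j with rfl | h
      · simp only [if_pos rfl]; exact measurable_const
      · simp only [if_neg h]; exact Measurable.of_comap_le (hm i h)
    have hEm0 : ∀ v, MeasurableSet (E v) := fun v =>
      (hDm m0 (fun i _ => (hPmeas i).comap_le)) (measurableSet_singleton v)
    have hSE : ∀ v, μ (S v ∩ E v) = μ (S v) * μ (E v) := fun v =>
      nullsIndep_inter μ P H0 hPmeas hindep j hjH (Set.Iic (ahat v)) measurableSet_Iic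
        (E v) (fun m hm => (hDm m hm) (measurableSet_singleton v))
    have hScE : ∀ v, μ (Sc v ∩ E v) = μ (Sc v) * μ (E v) := fun v =>
      nullsIndep_inter μ P H0 hPmeas hindep j hjH (Set.Ioi (lhat v)) measurableSet_Ioi
        (E v) (fun m hm => (hDm m hm) (measurableSet_singleton v))
    -- pointwise decompositions of the hallucinated terms
    have hM1d : ∀ ω, M1 ω = ∑ v : (Fin (t+1) → Bool) × (Fin (t+1) → Bool),
        (S v ∩ E v).indicator (fun _ => (nhat v)⁻¹) ω := by
      intro ω
      rw [Finset.sum_eq_single_of_mem (D ω) (Finset.mem_univ _)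
        (fun v _ hv => Set.indicator_of_notMem (fun hm => hv hm.2.symm) _)]
      show (if P j ω ≤ alpha j ω then (1:ℝ) else 0) / N ω = _
      rw [haD ω, hnD ω]
      by_cases hP : P j ω ≤ ahat (D ω)
      · rw [if_pos hP, Set.indicator_of_mem
          (Set.mem_inter (show ω ∈ S (D ω) from hP) (show ω ∈ E (D ω) from rfl)), one_div]
      · rw [if_neg hP, zero_div, Set.indicator_of_notMem (fun hm => hP hm.1)]
    have hM2d : ∀ ω, M2 ω = ∑ v : (Fin (t+1) → Bool) × (Fin (t+1) → Bool),
        (Sc v ∩ E v).indicator (fun _ => ahat v / ((1 - lhat v) * nhat v)) ω := by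
      intro ω
      rw [Finset.sum_eq_single_of_mem (D ω) (Finset.mem_univ _)
        (fun v _ hv => Set.indicator_of_notMem (fun hm => hv hm.2.symm) _)]
      show alpha j ω * (if lam j ω < P j ω then (1:ℝ) else 0) / (1 - lam j ω) / N ω = _
      rw [haD ω, hlD ω, hnD ω]
      by_cases hc : lhat (D ω) < P j ω
      · rw [if_pos hc, mul_one, Set.indicator_of_mem
          (Set.mem_inter (show ω ∈ Sc (D ω) from hc) (show ω ∈ E (D ω) from rfl)), div_div]
      · rw [if_neg hc, mul_zero, zero_div, zero_div,
          Set.indicator_of_notMem (fun hm => hc hm.1)]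
    -- the two integrals as finite sums
    have hM1sum : ∫ ω, M1 ω ∂μ = ∑ v : (Fin (t+1) → Bool) × (Fin (t+1) → Bool),
        (μ (S v ∩ E v)).toReal * (nhat v)⁻¹ := by
      rw [show M1 = fun ω => ∑ v : (Fin (t+1) → Bool) × (Fin (t+1) → Bool),
          (S v ∩ E v).indicator (fun _ => (nhat v)⁻¹) ω from funext hM1d]
      rw [integral_finset_sum _ fun v _ =>
        (integrable_const _).indicator ((hSm0 v).inter (hEm0 v))]
      refine Finset.sum_congr rfl fun v _ => ?_
      rw [integral_indicator_const _ ((hSm0 v).inter (hEm0 v)), smul_eq_mul]; rfl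
    have hM2sum : ∫ ω, M2 ω ∂μ = ∑ v : (Fin (t+1) → Bool) × (Fin (t+1) → Bool),
        (μ (Sc v ∩ E v)).toReal * (ahat v / ((1 - lhat v) * nhat v)) := by
      rw [show M2 = fun ω => ∑ v : (Fin (t+1) → Bool) × (Fin (t+1) → Bool),
          (Sc v ∩ E v).indicator (fun _ => ahat v / ((1 - lhat v) * nhat v)) ω
        from funext hM2d]
      rw [integral_finset_sum _ fun v _ =>
        (integrable_const _).indicator ((hScm0 v).inter (hEm0 v))]
      refine Finset.sum_congr rfl fun v _ => ?_
      rw [integral_indicator_const _ ((hScm0 v).inter (hEm0 v)), smul_eq_mul]; rfl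
    -- the per-configuration comparison, using super-uniformity and independence
    have hper : ∀ v : (Fin (t+1) → Bool) × (Fin (t+1) → Bool),
        (μ (S v ∩ E v)).toReal * (nhat v)⁻¹
          ≤ (μ (Sc v ∩ E v)).toReal * (ahat v / ((1 - lhat v) * nhat v)) := by
      intro v
      have hn1 : (1:ℝ) ≤ nhat v := le_max_right _ _
      have hnpos : (0:ℝ) < nhat v := lt_of_lt_of_le one_pos hn1
      by_cases hEv : μ (E v) = 0
      · have h1 : μ (S v ∩ E v) = 0 := measure_mono_null Set.inter_subset_right hEv
        have h2 : μ (Sc v ∩ E v) = 0 := measure_mono_null Set.inter_subset_right hEv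
        rw [h1, h2]
        simp
      · obtain ⟨ω0, hω0⟩ : ∃ ω0, D ω0 = v := by
          by_contra hno
          push_neg at hno
          refine hEv ?_
          have hempty : E v = ∅ :=
            Set.eq_empty_iff_forall_notMem.mpr fun ω hw => hno ω hw
          rw [hempty]; exact measure_empty
        have hav : ahat v = alpha j ω0 := by rw [← hω0]; exact (haD ω0).symm
        have hlv : lhat v = lam j ω0 := by rw [← hω0]; exact (hlD ω0).symm
        have ha0 : 0 < ahat v := hav ▸ (ha01 j ω0).1
        have ha1 : ahat v < 1 := hav ▸ (ha01 j ω0).2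
        have hl0 : 0 < lhat v := hlv ▸ (hl01 j ω0).1
        have hl1 : lhat v < 1 := hlv ▸ (hl01 j ω0).2
        have h1l : (0:ℝ) < 1 - lhat v := by linarith
        have hne1 : (1 - lhat v) ≠ 0 := ne_of_gt h1l
        have hnen : nhat v ≠ 0 := ne_of_gt hnpos
        rw [hSE v, hScE v, ENNReal.toReal_mul, ENNReal.toReal_mul]
        have hμS : (μ (S v)).toReal ≤ ahat v :=
          ENNReal.toReal_le_of_le_ofReal ha0.le
            (hnull j hjH (ahat v) ⟨ha0.le, ha1.le⟩)
        have hμSc : 1 - lhat v ≤ (μ (Sc v)).toReal := by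
          have hcompl : (Sc v)ᶜ = {ω | P j ω ≤ lhat v} := by
            ext ω
            simp only [Set.mem_compl_iff, Set.mem_setOf_eq, not_lt, hScdef]
          have hadd : μ (Sc v) + μ ((Sc v)ᶜ) = 1 := by
            rw [measure_add_measure_compl (hScm0 v)]
            exact measure_univ
          have h1 : (μ ((Sc v)ᶜ)).toReal ≤ lhat v := by
            rw [hcompl]
            exact ENNReal.toReal_le_of_le_ofReal hl0.le
              (hnull j hjH (lhat v) ⟨hl0.le, hl1.le⟩)
          have h2 : (μ (Sc v)).toReal + (μ ((Sc v)ᶜ)).toReal = 1 := by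
            rw [← ENNReal.toReal_add (measure_ne_top μ _) (measure_ne_top μ _), hadd,
              ENNReal.toReal_one]
          linarith
        have hE0 : 0 ≤ (μ (E v)).toReal := ENNReal.toReal_nonneg
        calc (μ (S v)).toReal * (μ (E v)).toReal * (nhat v)⁻¹
            ≤ ahat v * (μ (E v)).toReal * (nhat v)⁻¹ :=
              mul_le_mul_of_nonneg_right (mul_le_mul_of_nonneg_right hμS hE0)
                (inv_nonneg.mpr hnpos.le)
          _ = ((1 - lhat v) * (μ (E v)).toReal) * (ahat v / ((1 - lhat v) * nhat v)) := by
              field_simp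
          _ ≤ ((μ (Sc v)).toReal * (μ (E v)).toReal)
                * (ahat v / ((1 - lhat v) * nhat v)) :=
              mul_le_mul_of_nonneg_right (mul_le_mul_of_nonneg_right hμSc hE0)
                (div_nonneg ha0.le (mul_pos h1l hnpos).le)
    -- put everything together
    have hcore : ∫ ω, M1 ω ∂μ ≤ ∫ ω, M2 ω ∂μ := by
      rw [hM1sum, hM2sum]
      exact Finset.sum_le_sum fun v _ => hper v
    calc ∫ ω, T1 j ω ∂μ
        ≤ ∫ ω, M1 ω ∂μ := by
          refine integral_mono_of_nonneg (Filter.Eventually.of_forall fun ω => ?_)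
            hM1int (Filter.Eventually.of_forall hA)
          show 0 ≤ (if j ∈ H0 ∧ P j ω ≤ alpha j ω then (1:ℝ) else 0)
            / max (numRejections P alpha t ω) 1
          exact div_nonneg (by split_ifs <;> norm_num)
            (zero_le_one.trans (hmaxone ω))
      _ ≤ ∫ ω, M2 ω ∂μ := hcore
      _ = ∫ ω, T2 j ω ∂μ := by
          rw [show M2 = T2 j from funext fun ω => (hB ω).symm]
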